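/- Let f : ℝⁿ → ℝ be bounded from below, δ ∈ (0,1), μ > 0, 0 < γ_min ≤ γ_max, τ > 1 and L > 0. Let (x^k)_{k∈ℕ} ⊂ ℝⁿ, symmetric matrices H_k with ⟨H_k v, v⟩ ≥ μ‖v‖² for all v, scalars γ_k ≥ γ_min, and functions m_k : ℝⁿ → ℝ with m_k(x^k) = f(x^k) such that: (i) for every k, x^{k+1} is a global minimizer of x ↦ m_k(x) + (γ_k/2)‖x−x^k‖²_{H_k} and |f(x^{k+1}) − m_k(x^{k+1})| ≤ δ·(γ_k/2)·‖x^{k+1}−x^k‖²_{H_k}; (ii) for every k, either γ_k ≤ τ·γ_max, or there exists x̂^k ∈ ℝⁿ which is a global minimizer of x ↦ m_k(x) + (γ_k/(2τ))‖x−x^k‖²_{H_k} and which violates the acceptance criterion, i.e. |f(x̂^k) − m_k(x̂^k)| > δ·(γ_k/(2τ))·‖x̂^k−x^k‖²_{H_k}; (iii) for every k, the model error g_k := m_k − f is differentiable on ℝⁿ with ‖∇g_k(x)‖ ≤ L‖x − x^k‖ for all x ∈ ℝⁿ. If a subsequence (x^{k_j}) converges to some x* ∈ ℝⁿ, then γ_{k_j}·‖x^{k_j+1}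 − x^{k_j}‖ → 0 as j → ∞. -/

import Mathlib

open Matrix Filter

/-- The seminorm induced by a symmetric positive semidefinite matrix `H`:
`‖v‖_H = √⟨Hv, v⟩`. -/
noncomputable def hNorm {n : ℕ} (H : Matrix (Fin n) (Fin n) ℝ)
    (v : EuclideanSpace ℝ (Fin n)) : ℝ :=
  Real.sqrt ((H.mulVec v) ⬝ᵥ v)

theorem stmt3 {n : ℕ} (f : EuclideanSpace ℝ (Fin n) → ℝ)
    (hbdd : BddBelow (Set.range f))
    (δ μ γmin γmax τ L : ℝ) (hδ : δ ∈ Set.Ioo (0 : ℝ) 1) (hμ : 0 < μ)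
    (hγmin : 0 < γmin) (hγminmax : γmin ≤ γmax) (hτ : 1 < τ) (hL : 0 < L)
    (x : ℕ → EuclideanSpace ℝ (Fin n))
    (H : ℕ → Matrix (Fin n) (Fin n) ℝ)
    (hHsymm : ∀ k, (H k).IsSymm)
    (hHμ : ∀ k (v : EuclideanSpace ℝ (Fin n)), μ * ‖v‖ ^ 2 ≤ ((H k).mulVec v) ⬝ᵥ v)
    (γ : ℕ → ℝ) (hγ : ∀ k, γmin ≤ γ k)
    (m : ℕ → EuclideanSpace ℝ (Fin n) → ℝ)
    (hcenter : ∀ k, m k (x k) = f (x k))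
    -- (i) `x (k+1)` is a global minimizer of the regularized model and is accepted
    (hmin : ∀ k y, m k (x (k + 1)) + γ k / 2 * (hNorm (H k) (x (k + 1) - x k)) ^ 2 ≤
      m k y + γ k / 2 * (hNorm (H k) (y - x k)) ^ 2)
    (haccept : ∀ k, |f (x (k + 1)) - m k (x (k + 1))| ≤
      δ * (γ k / 2) * (hNorm (H k) (x (k + 1) - x k)) ^ 2)
    -- (ii) either the very first trial parameter was accepted, or the last rejected trial
    -- (with parameter `γ k / τ`) produced a subproblem minimizer violating the criterion
    (hback : ∀ k, γ k ≤ τ * γmax ∨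
      ∃ xhat : EuclideanSpace ℝ (Fin n),
        (∀ y, m k xhat + γ k / (2 * τ) * (hNorm (H k) (xhat - x k)) ^ 2 ≤
          m k y + γ k / (2 * τ) * (hNorm (H k) (y - x k)) ^ 2) ∧
        δ * (γ k / (2 * τ)) * (hNorm (H k) (xhat - x k)) ^ 2 < |f xhat - m k xhat|)
    -- (iii) the model error `g_k = m_k - f` is differentiable with `‖∇g_k(x)‖ ≤ L‖x - x^k‖`
    (hgdiff : ∀ k, Differentiable ℝ (fun y => m k y - f y))
    (hgrad : ∀ k y, ‖gradient (fun y => m k y - f y) y‖ ≤ L * ‖y - x k‖)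
    (xstar : EuclideanSpace ℝ (Fin n)) (φ : ℕ → ℕ) (hφ : StrictMono φ)
    (hsub : Tendsto (fun j => x (φ j)) atTop (nhds xstar)) :
    Tendsto (fun j => γ (φ j) * ‖x (φ j + 1) - x (φ j)‖) atTop (nhds 0) := by

  obtain ⟨hδ0, hδ1⟩ := hδ
  have hτ0 : (0:ℝ) < τ := lt_trans one_pos hτ
  have hγpos : ∀ k, 0 < γ k := fun k => lt_of_lt_of_le hγmin (hγ k)
  -- the H-seminorm squared
  have hq : ∀ k (v : EuclideanSpace ℝ (Fin n)),
      (hNorm (H k) v) ^ 2 = ((H k).mulVec v) ⬝ᵥ v := by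
    intro k v
    have h0 : (0:ℝ) ≤ ((H k).mulVec v) ⬝ᵥ v := le_trans (by positivity) (hHμ k v)
    simp [hNorm, Real.sq_sqrt h0]
  have hqμ : ∀ k (v : EuclideanSpace ℝ (Fin n)),
      μ * ‖v‖ ^ 2 ≤ (hNorm (H k) v) ^ 2 := by
    intro k v; rw [hq k v]; exact hHμ k v
  have hq0 : ∀ k (v : EuclideanSpace ℝ (Fin n)), 0 ≤ (hNorm (H k) v) ^ 2 :=
    fun k v => sq_nonneg _
  -- model error bound from the gradient bound
  have herr : ∀ k y, |m k y - f y| ≤ L * ‖y - x k‖ ^ 2 := by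
    intro k y
    set g : EuclideanSpace ℝ (Fin n) → ℝ := fun z => m k z - f z with hg
    have hgxk : g (x k) = 0 := by simp [hg, hcenter k]
    have hfd : ∀ z, ‖fderiv ℝ g z‖ ≤ L * ‖z - x k‖ := by
      intro z
      have := hgrad k z
      rwa [gradient, LinearIsometryEquiv.norm_map] at this
    have hconv : Convex ℝ (Metric.closedBall (x k) ‖y - x k‖) := convex_closedBall _ _
    have hxmem : x k ∈ Metric.closedBall (x k) ‖y - x k‖ := by
      simp [Metric.mem_closedBall]
    have hymem : y ∈ Metric.closedBall (x k) ‖y - x k‖ := by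
      simp [Metric.mem_closedBall, dist_eq_norm]
    have hbound : ∀ z ∈ Metric.closedBall (x k) ‖y - x k‖,
        ‖fderiv ℝ g z‖ ≤ L * ‖y - x k‖ := by
      intro z hz
      refine le_trans (hfd z) ?_
      have : ‖z - x k‖ ≤ ‖y - x k‖ := by
        rw [Metric.mem_closedBall, dist_eq_norm] at hz; exact hz
      nlinarith [norm_nonneg (z - x k)]
    have hmv := hconv.norm_image_sub_le_of_norm_fderiv_le
      (fun z _ => (hgdiff k) z) hbound hxmem hymem
    simp only [hcenter k, sub_self, sub_zero] at hmv
    rw [Real.norm_eq_abs] at hmv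
    nlinarith [hmv]
  -- γ is bounded
  set Γ : ℝ := max (τ * γmax) (2 * τ * L / (δ * μ)) with hΓdef
  have hγΓ : ∀ k, γ k ≤ Γ := by
    intro k
    rcases hback k with h | ⟨xhat, _, hviol⟩
    · exact le_max_of_le_left h
    · refine le_max_of_le_right ?_
      have h1 : |f xhat - m k xhat| ≤ L * ‖xhat - x k‖ ^ 2 := by
        rw [abs_sub_comm]; exact herr k xhat
      have h2 : δ * (γ k / (2 * τ)) * (μ * ‖xhat - x k‖ ^ 2) <
          L * ‖xhat - x k‖ ^ 2 := by
        have hpos : 0 < δ * (γ k / (2 * τ)) :=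
          mul_pos hδ0 (div_pos (hγpos k) (by positivity))
        nlinarith [hviol, h1, hqμ k (xhat - x k)]
      have hr : 0 < ‖xhat - x k‖ ^ 2 := by
        by_contra hc
        push_neg at hc
        have : ‖xhat - x k‖ ^ 2 = 0 := le_antisymm hc (sq_nonneg _)
        rw [this] at h2
        nlinarith
      have h3 : δ * (γ k / (2 * τ)) * μ < L := by
        have h3' : (δ * (γ k / (2 * τ)) * μ) * ‖xhat - x k‖ ^ 2 <
            L * ‖xhat - x k‖ ^ 2 := by nlinarith
        exact lt_of_mul_lt_mul_right h3' hr.le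
      have h4 : δ * (γ k / (2 * τ)) * μ * (2 * τ) < L * (2 * τ) :=
        mul_lt_mul_of_pos_right h3 (by positivity)
      have h5 : δ * (γ k / (2 * τ)) * μ * (2 * τ) = δ * γ k * μ := by
        field_simp
      rw [le_div_iff₀ (by positivity : (0:ℝ) < δ * μ)]
      nlinarith [h4, h5]
  -- sufficient decrease
  set c : ℕ → ℝ := fun k => (1 - δ) * (γ k / 2) * (hNorm (H k) (x (k + 1) - x k)) ^ 2
    with hcdef
  have hc0 : ∀ k, 0 ≤ c k := by
    intro k
    have h1 := hγpos k
    have h2 := hq0 k (x (k + 1) - x k)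
    have h3 : (0:ℝ) < 1 - δ := by linarith
    have : 0 ≤ (1 - δ) * (γ k / 2) := by positivity
    exact mul_nonneg this h2
  have hdec : ∀ k, f (x (k + 1)) + c k ≤ f (x k) := by
    intro k
    have h1 := hmin k (x k)
    have hz : hNorm (H k) (x k - x k) = 0 := by
      simp [hNorm]
    rw [hz, hcenter k] at h1
    have h2 := (abs_le.mp (haccept k)).2
    simp only [hcdef]
    nlinarith [h1, h2]
  -- summability of c
  obtain ⟨B, hB⟩ := hbdd
  have hBle : ∀ y, B ≤ f y := fun y => hB (Set.mem_range_self y)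
  have hsumbd : ∀ N, ∑ i ∈ Finset.range N, c i ≤ f (x 0) - B := by
    intro N
    have h1 : ∑ i ∈ Finset.range N, c i ≤
        ∑ i ∈ Finset.range N, (f (x i) - f (x (i + 1))) := by
      refine Finset.sum_le_sum fun i _ => ?_
      have := hdec i; linarith
    have h2 : ∑ i ∈ Finset.range N, (f (x i) - f (x (i + 1))) = f (x 0) - f (x N) := by
      have := Finset.sum_range_sub' (fun i => f (x i)) N
      simpa using this
    have := hBle (x N)
    linarith
  have hsum : Summable c := summable_of_sum_range_le hc0 hsumbd
  have hctend : Tendsto c atTop (nhds 0) := hsum.tendsto_atTop_zero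
  -- a k := γ k * ‖d k‖²_H tends to 0
  set a : ℕ → ℝ := fun k => γ k * (hNorm (H k) (x (k + 1) - x k)) ^ 2 with hadef
  have hatend : Tendsto a atTop (nhds 0) := by
    have h1δ : (0:ℝ) < 1 - δ := by linarith
    have : Tendsto (fun k => c k * (2 / (1 - δ))) atTop (nhds (0 * (2 / (1 - δ)))) :=
      hctend.mul_const _
    rw [zero_mul] at this
    convert this using 2 with k
    simp only [hadef, hcdef]
    field_simp
  have ha0 : ∀ k, 0 ≤ a k := by
    intro k; have := (hγpos k).le; have := hq0 k (x (k + 1) - x k); positivity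
  -- b k := γ k * ‖d k‖ tends to 0
  set b : ℕ → ℝ := fun k => γ k * ‖x (k + 1) - x k‖ with hbdef
  have hb0 : ∀ k, 0 ≤ b k := fun k => mul_nonneg (hγpos k).le (norm_nonneg _)
  have hbsq : ∀ k, b k ^ 2 ≤ (Γ / μ) * a k := by
    intro k
    have h1 := hqμ k (x (k + 1) - x k)
    have h2 := hγΓ k
    have h3 := hγpos k
    have h4 := ha0 k
    rw [div_mul_eq_mul_div, le_div_iff₀ hμ]
    simp only [hbdef, hadef] at *
    have e1 : γ k * γ k * (μ * ‖x (k + 1) - x k‖ ^ 2) ≤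
        γ k * γ k * (hNorm (H k) (x (k + 1) - x k)) ^ 2 :=
      mul_le_mul_of_nonneg_left h1 (by positivity)
    have e2 : γ k * (γ k * (hNorm (H k) (x (k + 1) - x k)) ^ 2) ≤
        Γ * (γ k * (hNorm (H k) (x (k + 1) - x k)) ^ 2) :=
      mul_le_mul_of_nonneg_right h2 h4
    nlinarith [e1, e2]
  have hbsqtend : Tendsto (fun k => b k ^ 2) atTop (nhds 0) := by
    have hmul : Tendsto (fun k => (Γ / μ) * a k) atTop (nhds ((Γ / μ) * 0)) :=
      hatend.const_mul _
    rw [mul_zero] at hmul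
    exact squeeze_zero (fun k => sq_nonneg (b k)) hbsq hmul
  have hbtend : Tendsto b atTop (nhds 0) := by
    have := (Real.continuous_sqrt.tendsto 0).comp hbsqtend
    simp only [Function.comp_def, Real.sqrt_zero] at this
    convert this using 2 with k
    rw [Real.sqrt_sq (hb0 k)]
  exact hbtend.comp hφ.tendsto_atTop
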